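/- arXiv:1710.05533 — 3 statements merged into one kernel-verified Lean document; each statement's English description precedes it below -/
import Mathlib

section
/- Let 𝕌 ⊆ ℝ^N and 𝔻 ⊆ ℝ^M be nonempty closed convex sets with metric projections Π_𝕌 and Π_𝔻. Suppose (U*, λ*) ∈ 𝕌 × 𝔻 satisfies the fixed-point equations U* = Π_𝕌((1/τ_U)Π_𝕌(τ_U U* − α∇_U L(U*,λ*))) and λ* = Π_𝔻((1/τ_λ)Π_𝔻(τ_λ λ* + β∇_λ L(U*,λ*))). Given (U^ℓ, λ^ℓ) ∈ 𝕌 × 𝔻, define U^{ℓ+1} = Π_𝕌((1/τ_U)Π_𝕌(τ_U U^ℓ − α∇_U L(U^ℓ,λ^ℓ))) and λ^{ℓ+1} = Π_𝔻((1/τ_λ)Π_𝔻(τ_λ λ^ℓ + β∇_λ L(U^ℓ,λ^ℓ))). Writing ζ^ℓ = (U^ℓ, λ^ℓ) and ζ* = (U*, λ*), one has ‖ζ^{ℓ+1} − ζ*‖² ≤ max{1/τ_U², 1/τ_λ²}·‖ζ^ℓ − ζ*‖² + max{α²/τ_U², β²/τ_λ²}·‖Φ(ζ^ℓ) − Φ(ζ*)‖²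 − 2(α/τ_U²)⟨Φ₁(ζ^ℓ) − Φ₁(ζ*), U^ℓ − U*⟩ − 2(β/τ_λ²)⟨Φ₂(ζ^ℓ) − Φ₂(ζ*), λ^ℓ − λ*⟩. -/
open scoped RealInnerProductSpace

/-- Matrix-vector multiplication as a map between Euclidean spaces. -/
noncomputable def mulVecE {m n : ℕ} (A : Matrix (Fin m) (Fin n) ℝ)
    (x : EuclideanSpace ℝ (Fin n)) : EuclideanSpace ℝ (Fin m) :=
  (EuclideanSpace.equiv (Fin m) ℝ).symm (A.mulVec (EuclideanSpace.equiv (Fin n) ℝ x))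

/-- Primal gradient of the Lagrangian:
`∇_U L(U,λ) = P̃ᵀ(P_b + P̃U) + ρU − D_dᵀλ`. -/
noncomputable def gradUL {N M K : ℕ} (Pt : Matrix (Fin K) (Fin N) ℝ)
    (Dd : Matrix (Fin M) (Fin N) ℝ) (Pb : EuclideanSpace ℝ (Fin K)) (ρ : ℝ)
    (U : EuclideanSpace ℝ (Fin N)) (lam : EuclideanSpace ℝ (Fin M)) :
    EuclideanSpace ℝ (Fin N) :=
  mulVecE Pt.transpose (Pb + mulVecE Pt U) + ρ • U - mulVecE Dd.transpose lam

/-- Dual gradient of the Lagrangian: `∇_λ L(U,λ) = Y_b − D_d U`. -/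
noncomputable def gradLL {N M : ℕ} (Dd : Matrix (Fin M) (Fin N) ℝ)
    (Yb : EuclideanSpace ℝ (Fin M)) (U : EuclideanSpace ℝ (Fin N)) :
    EuclideanSpace ℝ (Fin M) :=
  Yb - mulVecE Dd U

/-- First component of the mapping `Φ`: `Φ₁(U,λ) = ∇_U L(U,λ) + ((1−τ_U)/α)U`. -/
noncomputable def Phi1 {N M K : ℕ} (Pt : Matrix (Fin K) (Fin N) ℝ)
    (Dd : Matrix (Fin M) (Fin N) ℝ) (Pb : EuclideanSpace ℝ (Fin K))
    (ρ α τU : ℝ) (U : EuclideanSpace ℝ (Fin N)) (lam : EuclideanSpace ℝ (Fin M)) :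
    EuclideanSpace ℝ (Fin N) :=
  gradUL Pt Dd Pb ρ U lam + ((1 - τU)/α) • U

/-- Second component of the mapping `Φ`: `Φ₂(U,λ) = −∇_λ L(U,λ) + ((1−τ_λ)/β)λ`. -/
noncomputable def Phi2 {N M : ℕ} (Dd : Matrix (Fin M) (Fin N) ℝ)
    (Yb : EuclideanSpace ℝ (Fin M)) (β τlam : ℝ)
    (U : EuclideanSpace ℝ (Fin N)) (lam : EuclideanSpace ℝ (Fin M)) :
    EuclideanSpace ℝ (Fin M) :=
  -gradLL Dd Yb U + ((1 - τlam)/β) • lam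



lemma proj_nonexp {E : Type*} [NormedAddCommGroup E] [InnerProductSpace ℝ E] {S : Set E}
    (p : E → E) (hp : ∀ x, p x ∈ S ∧ ∀ y ∈ S, ⟪x - p x, y - p x⟫ ≤ 0) (x y : E) :
    ‖p x - p y‖ ≤ ‖x - y‖ := by
  have h1 := (hp x).2 (p y) (hp y).1
  have h2 := (hp y).2 (p x) (hp x).1
  have key : ‖p x - p y‖^2 ≤ ⟪x - y, p x - p y⟫ := by
    have expand : ⟪x - p x, p y - p x⟫ + ⟪y - p y, p x - p y⟫
        = ‖p x - p y‖^2 - ⟪x - y, p x - p y⟫ := by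
      simp only [inner_sub_left, inner_sub_right, ← real_inner_self_eq_norm_sq]
      linarith [real_inner_comm (p y) (p x), real_inner_comm x (p y), real_inner_comm y (p x)]
    linarith [expand ▸ add_nonpos h1 h2]
  have hle := le_trans key (real_inner_le_norm (x - y) (p x - p y))
  rcases eq_or_lt_of_le (norm_nonneg (p x - p y)) with h | h
  · rw [← h]; exact norm_nonneg _
  · nlinarith

lemma one_step {E : Type*} [NormedAddCommGroup E] [InnerProductSpace ℝ E] {S : Set E}
    (p : E → E) (hp : ∀ x, p x ∈ S ∧ ∀ y ∈ S, ⟪x - p x, y - p x⟫ ≤ 0)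
    (τ : ℝ) (hτ : 0 < τ) (a b : E) :
    ‖p ((1/τ) • p a) - p ((1/τ) • p b)‖^2 ≤ (1/τ^2) * ‖a - b‖^2 := by
  have h1 : ‖p ((1/τ) • p a) - p ((1/τ) • p b)‖ ≤ ‖(1/τ) • p a - (1/τ) • p b‖ :=
    proj_nonexp p hp _ _
  have h2 : ‖(1/τ) • p a - (1/τ) • p b‖ = (1/τ) * ‖p a - p b‖ := by
    rw [← smul_sub, norm_smul, Real.norm_eq_abs, abs_of_pos (by positivity)]
  have h3 : ‖p a - p b‖ ≤ ‖a - b‖ := proj_nonexp p hp a b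
  have h4 : ‖p ((1/τ) • p a) - p ((1/τ) • p b)‖ ≤ (1/τ) * ‖a - b‖ := by
    rw [h2] at h1
    calc _ ≤ (1/τ) * ‖p a - p b‖ := h1
    _ ≤ (1/τ) * ‖a - b‖ := by gcongr
  have h5 := mul_self_le_mul_self (norm_nonneg _) h4
  calc ‖p ((1/τ) • p a) - p ((1/τ) • p b)‖^2 ≤ ((1/τ)*‖a-b‖)^2 := by
        simpa [pow_two] using h5
    _ = (1/τ^2) * ‖a - b‖^2 := by rw [mul_pow, div_pow, one_pow]

/-- One-iteration inequality for the SPDS update, where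
`‖ζ‖² = ‖U‖₂² + ‖λ‖₂²` on `ℝ^N × ℝ^M`. -/
theorem spds_one_iteration_inequality
    {N M K : ℕ} (hN : 0 < N) (hM : 0 < M) (hK : 0 < K)
    (Pt : Matrix (Fin K) (Fin N) ℝ) (Dd : Matrix (Fin M) (Fin N) ℝ)
    (Pb : EuclideanSpace ℝ (Fin K)) (Yb : EuclideanSpace ℝ (Fin M))
    (ρ α β τU τlam : ℝ) (hρ : 0 ≤ ρ) (hα : 0 < α) (hβ : 0 < β)
    (hτU : τU ∈ Set.Ioo (0:ℝ) 1) (hτlam : τlam ∈ Set.Ioo (0:ℝ) 1)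
    (SU : Set (EuclideanSpace ℝ (Fin N))) (SD : Set (EuclideanSpace ℝ (Fin M)))
    (hSUne : SU.Nonempty) (hSUcl : IsClosed SU) (hSUconv : Convex ℝ SU)
    (hSDne : SD.Nonempty) (hSDcl : IsClosed SD) (hSDconv : Convex ℝ SD)
    (projU : EuclideanSpace ℝ (Fin N) → EuclideanSpace ℝ (Fin N))
    (hprojU : ∀ x, projU x ∈ SU ∧ ∀ y ∈ SU, ⟪x - projU x, y - projU x⟫ ≤ 0)
    (projD : EuclideanSpace ℝ (Fin M) → EuclideanSpace ℝ (Fin M))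
    (hprojD : ∀ x, projD x ∈ SD ∧ ∀ y ∈ SD, ⟪x - projD x, y - projD x⟫ ≤ 0)
    (Ustar : EuclideanSpace ℝ (Fin N)) (lstar : EuclideanSpace ℝ (Fin M))
    (hUstarmem : Ustar ∈ SU) (hlstarmem : lstar ∈ SD)
    (hfixU : Ustar = projU ((1/τU) • projU (τU • Ustar - α • gradUL Pt Dd Pb ρ Ustar lstar)))
    (hfixl : lstar = projD ((1/τlam) • projD (τlam • lstar + β • gradLL Dd Yb Ustar)))
    (Ul : EuclideanSpace ℝ (Fin N)) (ll : EuclideanSpace ℝ (Fin M))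
    (hUlmem : Ul ∈ SU) (hllmem : ll ∈ SD)
    (Up : EuclideanSpace ℝ (Fin N)) (lp : EuclideanSpace ℝ (Fin M))
    (hUp : Up = projU ((1/τU) • projU (τU • Ul - α • gradUL Pt Dd Pb ρ Ul ll)))
    (hlp : lp = projD ((1/τlam) • projD (τlam • ll + β • gradLL Dd Yb Ul))) :
    ‖Up - Ustar‖^2 + ‖lp - lstar‖^2 ≤
      max (1/τU^2) (1/τlam^2) * (‖Ul - Ustar‖^2 + ‖ll - lstar‖^2)
      + max (α^2/τU^2) (β^2/τlam^2) *
          (‖Phi1 Pt Dd Pb ρ α τU Ul ll - Phi1 Pt Dd Pb ρ α τU Ustar lstar‖^2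
            + ‖Phi2 Dd Yb β τlam Ul ll - Phi2 Dd Yb β τlam Ustar lstar‖^2)
      - 2*(α/τU^2) *
          ⟪Phi1 Pt Dd Pb ρ α τU Ul ll - Phi1 Pt Dd Pb ρ α τU Ustar lstar, Ul - Ustar⟫
      - 2*(β/τlam^2) *
          ⟪Phi2 Dd Yb β τlam Ul ll - Phi2 Dd Yb β τlam Ustar lstar, ll - lstar⟫ := by
  have hαne : α ≠ 0 := ne_of_gt hα
  have hβne : β ≠ 0 := ne_of_gt hβ
  -- primal part
  have keyU := one_step projU hprojU τU hτU.1
      (τU • Ul - α • gradUL Pt Dd Pb ρ Ul ll)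
      (τU • Ustar - α • gradUL Pt Dd Pb ρ Ustar lstar)
  rw [← hUp, ← hfixU] at keyU
  have hvU : (τU • Ul - α • gradUL Pt Dd Pb ρ Ul ll)
      - (τU • Ustar - α • gradUL Pt Dd Pb ρ Ustar lstar)
      = (Ul - Ustar) - α • (Phi1 Pt Dd Pb ρ α τU Ul ll - Phi1 Pt Dd Pb ρ α τU Ustar lstar) := by
    simp only [Phi1]
    match_scalars <;> (field_simp [hαne]; try ring)
  rw [hvU] at keyU
  have hexpU : ‖(Ul - Ustar) - α • (Phi1 Pt Dd Pb ρ α τU Ul ll - Phi1 Pt Dd Pb ρ α τU Ustar lstar)‖^2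
      = ‖Ul - Ustar‖^2
        - 2*α*⟪Phi1 Pt Dd Pb ρ α τU Ul ll - Phi1 Pt Dd Pb ρ α τU Ustar lstar, Ul - Ustar⟫
        + α^2 * ‖Phi1 Pt Dd Pb ρ α τU Ul ll - Phi1 Pt Dd Pb ρ α τU Ustar lstar‖^2 := by
    rw [norm_sub_sq_real, real_inner_smul_right, norm_smul,
      real_inner_comm (Ul - Ustar)]
    simp [Real.norm_eq_abs, mul_pow, sq_abs]
    ring
  rw [hexpU] at keyU
  -- dual part
  have keyL := one_step projD hprojD τlam hτlam.1
      (τlam • ll + β • gradLL Dd Yb Ul)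
      (τlam • lstar + β • gradLL Dd Yb Ustar)
  rw [← hlp, ← hfixl] at keyL
  have hvL : (τlam • ll + β • gradLL Dd Yb Ul)
      - (τlam • lstar + β • gradLL Dd Yb Ustar)
      = (ll - lstar) - β • (Phi2 Dd Yb β τlam Ul ll - Phi2 Dd Yb β τlam Ustar lstar) := by
    simp only [Phi2]
    match_scalars <;> (field_simp [hβne]; try ring)
  rw [hvL] at keyL
  have hexpL : ‖(ll - lstar) - β • (Phi2 Dd Yb β τlam Ul ll - Phi2 Dd Yb β τlam Ustar lstar)‖^2
      = ‖ll - lstar‖^2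
        - 2*β*⟪Phi2 Dd Yb β τlam Ul ll - Phi2 Dd Yb β τlam Ustar lstar, ll - lstar⟫
        + β^2 * ‖Phi2 Dd Yb β τlam Ul ll - Phi2 Dd Yb β τlam Ustar lstar‖^2 := by
    rw [norm_sub_sq_real, real_inner_smul_right, norm_smul,
      real_inner_comm (ll - lstar)]
    simp [Real.norm_eq_abs, mul_pow, sq_abs]
    ring
  rw [hexpL] at keyL
  -- combine
  have m1 : (1/τU^2) * ‖Ul - Ustar‖^2 ≤ max (1/τU^2) (1/τlam^2) * ‖Ul - Ustar‖^2 :=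
    mul_le_mul_of_nonneg_right (le_max_left _ _) (sq_nonneg _)
  have m2 : (1/τlam^2) * ‖ll - lstar‖^2 ≤ max (1/τU^2) (1/τlam^2) * ‖ll - lstar‖^2 :=
    mul_le_mul_of_nonneg_right (le_max_right _ _) (sq_nonneg _)
  have m3 : (1/τU^2) * (α^2 * ‖Phi1 Pt Dd Pb ρ α τU Ul ll - Phi1 Pt Dd Pb ρ α τU Ustar lstar‖^2)
      ≤ max (α^2/τU^2) (β^2/τlam^2) * ‖Phi1 Pt Dd Pb ρ α τU Ul ll - Phi1 Pt Dd Pb ρ α τU Ustar lstar‖^2 := by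
    rw [← mul_assoc]
    exact mul_le_mul_of_nonneg_right (by rw [one_div, inv_mul_eq_div]; exact le_max_left _ _) (sq_nonneg _)
  have m4 : (1/τlam^2) * (β^2 * ‖Phi2 Dd Yb β τlam Ul ll - Phi2 Dd Yb β τlam Ustar lstar‖^2)
      ≤ max (α^2/τU^2) (β^2/τlam^2) * ‖Phi2 Dd Yb β τlam Ul ll - Phi2 Dd Yb β τlam Ustar lstar‖^2 := by
    rw [← mul_assoc]
    exact mul_le_mul_of_nonneg_right (by rw [one_div, inv_mul_eq_div]; exact le_max_right _ _) (sq_nonneg _)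
  have rU : (1/τU^2) * (‖Ul - Ustar‖^2
        - 2*α*⟪Phi1 Pt Dd Pb ρ α τU Ul ll - Phi1 Pt Dd Pb ρ α τU Ustar lstar, Ul - Ustar⟫
        + α^2 * ‖Phi1 Pt Dd Pb ρ α τU Ul ll - Phi1 Pt Dd Pb ρ α τU Ustar lstar‖^2)
      = (1/τU^2) * ‖Ul - Ustar‖^2
        + (1/τU^2) * (α^2 * ‖Phi1 Pt Dd Pb ρ α τU Ul ll - Phi1 Pt Dd Pb ρ α τU Ustar lstar‖^2)
        - 2*(α/τU^2) * ⟪Phi1 Pt Dd Pb ρ α τU Ul ll - Phi1 Pt Dd Pb ρ α τU Ustar lstar, Ul - Ustar⟫ := by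
    ring
  have rL : (1/τlam^2) * (‖ll - lstar‖^2
        - 2*β*⟪Phi2 Dd Yb β τlam Ul ll - Phi2 Dd Yb β τlam Ustar lstar, ll - lstar⟫
        + β^2 * ‖Phi2 Dd Yb β τlam Ul ll - Phi2 Dd Yb β τlam Ustar lstar‖^2)
      = (1/τlam^2) * ‖ll - lstar‖^2
        + (1/τlam^2) * (β^2 * ‖Phi2 Dd Yb β τlam Ul ll - Phi2 Dd Yb β τlam Ustar lstar‖^2)
        - 2*(β/τlam^2) * ⟪Phi2 Dd Yb β τlam Ul ll - Phi2 Dd Yb β τlam Ustar lstar, ll - lstar⟫ := by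
    ring
  rw [rU] at keyU
  rw [rL] at keyL
  have rhs : max (1/τU^2) (1/τlam^2) * (‖Ul - Ustar‖^2 + ‖ll - lstar‖^2)
      = max (1/τU^2) (1/τlam^2) * ‖Ul - Ustar‖^2 + max (1/τU^2) (1/τlam^2) * ‖ll - lstar‖^2 := by ring
  have rhs2 : max (α^2/τU^2) (β^2/τlam^2) *
          (‖Phi1 Pt Dd Pb ρ α τU Ul ll - Phi1 Pt Dd Pb ρ α τU Ustar lstar‖^2
            + ‖Phi2 Dd Yb β τlam Ul ll - Phi2 Dd Yb β τlam Ustar lstar‖^2)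
      = max (α^2/τU^2) (β^2/τlam^2) * ‖Phi1 Pt Dd Pb ρ α τU Ul ll - Phi1 Pt Dd Pb ρ α τU Ustar lstar‖^2
        + max (α^2/τU^2) (β^2/τlam^2) * ‖Phi2 Dd Yb β τlam Ul ll - Phi2 Dd Yb β τlam Ustar lstar‖^2 := by ring
  rw [rhs, rhs2]
  linarith [keyU, keyL, m1, m2, m3, m4]
end

section
/- Let G : ℝ^N → ℝ be convex and differentiable with gradient ∇G, and for j = 1,…,M let d_j : ℝ^N → ℝ be convex and differentiable with gradient ∇d_j. Let ρ ≥ 0, α > 0, β > 0, and τ_U, τ_λ ∈ (0,1). Define Φ(U,λ) = (∇G(U) + ρU + Σ_{j=1}^M λ_j ∇d_j(U) + ((1−τ_U)/α)U, −d(U) + ((1−τ_λ)/β)λ), where d(U) = (d_1(U),…,d_M(U)) ∈ ℝ^M. Then Φ is strongly monotone on ℝ^N × ℝ^M_{≥0} with constant c = min{ρ + (1−τ_U)/α, (1−τ_λ)/β}: for all U₁, U₂ ∈ ℝ^N and all λ₁, λ₂ ∈ ℝ^M with nonnegative components, ⟨Φ(U₁,λ₁) − Φ(U₂,λ₂), (U₁,λ₁)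 − (U₂,λ₂)⟩ ≥ c·(‖U₁ − U₂‖₂² + ‖λ₁ − λ₂‖₂²). -/
open scoped RealInnerProductSpace

lemma grad_subgrad {E : Type*} [NormedAddCommGroup E] [InnerProductSpace ℝ E] [CompleteSpace E]
    {f : E → ℝ} (hf : ConvexOn ℝ Set.univ f) {x g : E}
    (h : HasGradientAt f g x) (y : E) : ⟪g, y - x⟫ ≤ f y - f x := by
  set c : ℝ → E := fun t => x + t • (y - x) with hc
  have hderc : HasDerivAt c (y - x) 0 := by
    simpa [hc] using ((hasDerivAt_id (0:ℝ)).smul_const (y - x)).const_add x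
  have hc0 : c 0 = x := by simp [hc]
  have hfd : HasDerivAt (f ∘ c) ⟪g, y - x⟫ 0 := by
    have h' := (hasGradientAt_iff_hasFDerivAt.mp h)
    rw [← hc0] at h'
    have := h'.comp_hasDerivAt (x := 0) hderc
    simpa [InnerProductSpace.toDual_apply_apply] using this
  have hconv : ConvexOn ℝ Set.univ (f ∘ c) := by
    have h1 := hf.comp_affineMap (AffineMap.lineMap x y)
    simp only [Set.preimage_univ] at h1
    have : (f ∘ (AffineMap.lineMap x y)) = f ∘ c := by
      funext t; simp [AffineMap.lineMap_apply, hc, add_comm]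
    rwa [this] at h1
  have := hconv.le_slope_of_hasDerivAt (Set.mem_univ 0) (Set.mem_univ 1) one_pos hfd
  simpa [slope, hc] using this

/-- With `G` convex differentiable, `d_j` convex differentiable,
`ρ ≥ 0`, `α, β > 0`, `τ_U, τ_λ ∈ (0,1)`, the KKT-type map
`Φ(U,λ) = (∇G(U) + ρU + Σ_j λ_j ∇d_j(U) + ((1−τ_U)/α)U, −d(U) + ((1−τ_λ)/β)λ)`
is strongly monotone on `ℝ^N × ℝ^M_{≥0}` with constant
`c = min{ρ + (1−τ_U)/α, (1−τ_λ)/β}`. -/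
theorem kkt_map_strongly_monotone_on_nonneg_duals
    {N M : ℕ}
    (G : EuclideanSpace ℝ (Fin N) → ℝ)
    (gradG : EuclideanSpace ℝ (Fin N) → EuclideanSpace ℝ (Fin N))
    (hGconv : ConvexOn ℝ Set.univ G)
    (hG : ∀ x, HasGradientAt G (gradG x) x)
    (d : Fin M → EuclideanSpace ℝ (Fin N) → ℝ)
    (gradd : Fin M → EuclideanSpace ℝ (Fin N) → EuclideanSpace ℝ (Fin N))
    (hdconv : ∀ j, ConvexOn ℝ Set.univ (d j))
    (hd : ∀ j x, HasGradientAt (d j) (gradd j x) x)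
    (ρ α β τU τlam : ℝ) (hρ : 0 ≤ ρ) (hα : 0 < α) (hβ : 0 < β)
    (hτU : τU ∈ Set.Ioo (0:ℝ) 1) (hτlam : τlam ∈ Set.Ioo (0:ℝ) 1)
    (U₁ U₂ : EuclideanSpace ℝ (Fin N)) (l₁ l₂ : EuclideanSpace ℝ (Fin M))
    (hl₁ : ∀ j, 0 ≤ l₁ j) (hl₂ : ∀ j, 0 ≤ l₂ j) :
    min (ρ + (1 - τU)/α) ((1 - τlam)/β) * (‖U₁ - U₂‖^2 + ‖l₁ - l₂‖^2) ≤
      ⟪(gradG U₁ + ρ • U₁ + (∑ j, l₁ j • gradd j U₁) + ((1 - τU)/α) • U₁)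
          - (gradG U₂ + ρ • U₂ + (∑ j, l₂ j • gradd j U₂) + ((1 - τU)/α) • U₂),
        U₁ - U₂⟫
      + ⟪(-(EuclideanSpace.equiv (Fin M) ℝ).symm (fun j => d j U₁)
            + ((1 - τlam)/β) • l₁)
          - (-(EuclideanSpace.equiv (Fin M) ℝ).symm (fun j => d j U₂)
            + ((1 - τlam)/β) • l₂),
        l₁ - l₂⟫ := by
  set a := (1 - τU)/α with ha
  set b := (1 - τlam)/β with hb
  set Δ := U₁ - U₂ with hΔ
  -- monotonicity of gradG
  have e1 := grad_subgrad hGconv (hG U₁) U₂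
  have e2 := grad_subgrad hGconv (hG U₂) U₁
  have hGmono : 0 ≤ ⟪gradG U₁ - gradG U₂, Δ⟫ := by
    rw [hΔ, inner_sub_left, inner_sub_right, inner_sub_right]
    rw [inner_sub_right] at e1 e2
    linarith
  -- per-constraint key inequality
  have hkeyj : ∀ j, (d j U₁ - d j U₂) * (l₁ j - l₂ j) ≤
      ⟪l₁ j • gradd j U₁ - l₂ j • gradd j U₂, Δ⟫ := by
    intro j
    have s1 := grad_subgrad (hdconv j) (hd j U₁) U₂
    have s2 := grad_subgrad (hdconv j) (hd j U₂) U₁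
    rw [inner_sub_right] at s1 s2
    rw [hΔ, inner_sub_left, real_inner_smul_left, real_inner_smul_left,
      inner_sub_right, inner_sub_right]
    nlinarith [mul_nonneg (hl₁ j) (by linarith :
        (0:ℝ) ≤ (⟪gradd j U₁, U₁⟫ - ⟪gradd j U₁, U₂⟫) - (d j U₁ - d j U₂)),
      mul_nonneg (hl₂ j) (by linarith :
        (0:ℝ) ≤ (d j U₁ - d j U₂) - (⟪gradd j U₂, U₁⟫ - ⟪gradd j U₂, U₂⟫))]
  have hsum : ∑ j, (d j U₁ - d j U₂) * (l₁ j - l₂ j) ≤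
      ⟪(∑ j, l₁ j • gradd j U₁) - (∑ j, l₂ j • gradd j U₂), Δ⟫ := by
    rw [← Finset.sum_sub_distrib, sum_inner]
    exact Finset.sum_le_sum fun j _ => hkeyj j
  -- expand the first inner product
  have h1 : ⟪(gradG U₁ + ρ • U₁ + (∑ j, l₁ j • gradd j U₁) + a • U₁)
          - (gradG U₂ + ρ • U₂ + (∑ j, l₂ j • gradd j U₂) + a • U₂), Δ⟫
      = ⟪gradG U₁ - gradG U₂, Δ⟫
        + ⟪(∑ j, l₁ j • gradd j U₁) - (∑ j, l₂ j • gradd j U₂), Δ⟫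
        + (ρ + a) * ‖Δ‖^2 := by
    rw [show (gradG U₁ + ρ • U₁ + (∑ j, l₁ j • gradd j U₁) + a • U₁)
          - (gradG U₂ + ρ • U₂ + (∑ j, l₂ j • gradd j U₂) + a • U₂)
        = (gradG U₁ - gradG U₂)
          + ((∑ j, l₁ j • gradd j U₁) - (∑ j, l₂ j • gradd j U₂))
          + (ρ + a) • Δ by rw [hΔ]; module]
    rw [inner_add_left, inner_add_left, real_inner_smul_left,
      real_inner_self_eq_norm_sq]
  -- expand the second inner product
  have hD : ⟪((EuclideanSpace.equiv (Fin M) ℝ).symm (fun j => d j U₁)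
        - (EuclideanSpace.equiv (Fin M) ℝ).symm (fun j => d j U₂)), l₁ - l₂⟫
      = ∑ j, (d j U₁ - d j U₂) * (l₁ j - l₂ j) := by
    simp [PiLp.inner_apply, PiLp.sub_apply]
    exact Finset.sum_congr rfl fun _ _ => mul_comm _ _
  have h2 : ⟪(-(EuclideanSpace.equiv (Fin M) ℝ).symm (fun j => d j U₁) + b • l₁)
          - (-(EuclideanSpace.equiv (Fin M) ℝ).symm (fun j => d j U₂) + b • l₂),
        l₁ - l₂⟫
      = -(∑ j, (d j U₁ - d j U₂) * (l₁ j - l₂ j)) + b * ‖l₁ - l₂‖^2 := by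
    rw [show (-(EuclideanSpace.equiv (Fin M) ℝ).symm (fun j => d j U₁) + b • l₁)
          - (-(EuclideanSpace.equiv (Fin M) ℝ).symm (fun j => d j U₂) + b • l₂)
        = -((EuclideanSpace.equiv (Fin M) ℝ).symm (fun j => d j U₁)
            - (EuclideanSpace.equiv (Fin M) ℝ).symm (fun j => d j U₂))
          + b • (l₁ - l₂) by module]
    rw [inner_add_left, inner_neg_left, real_inner_smul_left,
      real_inner_self_eq_norm_sq, hD]
  rw [h1, h2]
  have hm1 : min (ρ + a) b ≤ ρ + a := min_le_left _ _
  have hm2 : min (ρ + a) b ≤ b := min_le_right _ _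
  nlinarith [sq_nonneg ‖Δ‖, sq_nonneg ‖l₁ - l₂‖,
    mul_nonneg (sub_nonneg.2 hm1) (sq_nonneg ‖Δ‖),
    mul_nonneg (sub_nonneg.2 hm2) (sq_nonneg ‖l₁ - l₂‖)]
end

section
/- The mapping Φ is strongly monotone on all of ℝ^N × ℝ^M with constant c = min{ρ + (1−τ_U)/α, (1−τ_λ)/β}: for all (U₁,λ₁), (U₂,λ₂) ∈ ℝ^N × ℝ^M, ⟨Φ(U₁,λ₁) − Φ(U₂,λ₂), (U₁,λ₁) − (U₂,λ₂)⟩ ≥ c·(‖U₁ − U₂‖₂² + ‖λ₁ − λ₂‖₂²). -/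
open scoped RealInnerProductSpace

lemma mulVecE_sub {m n : ℕ} (A : Matrix (Fin m) (Fin n) ℝ)
    (x y : EuclideanSpace ℝ (Fin n)) :
    mulVecE A (x - y) = mulVecE A x - mulVecE A y := by
  simp [mulVecE, Matrix.mulVec_sub]

lemma inner_mulVecE {m n : ℕ} (A : Matrix (Fin m) (Fin n) ℝ)
    (x : EuclideanSpace ℝ (Fin m)) (y : EuclideanSpace ℝ (Fin n)) :
    ⟪mulVecE A.transpose x, y⟫ = ⟪x, mulVecE A y⟫ := by
  simp only [mulVecE, EuclideanSpace.equiv, PiLp.continuousLinearEquiv_apply,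
    PiLp.continuousLinearEquiv_symm_apply,
    PiLp.inner_apply, RCLike.inner_apply, starRingEnd_apply, star_trivial,
    PiLp.coe_symm_continuousLinearEquiv, PiLp.toLp_apply, Matrix.mulVec, dotProduct, Matrix.transpose_apply,
    PiLp.coe_continuousLinearEquiv, Finset.sum_mul, Finset.mul_sum]
  rw [Finset.sum_comm]
  exact Finset.sum_congr rfl fun i _ => Finset.sum_congr rfl fun j _ => by ring

lemma Phi1_diff {N M K : ℕ} (Pt : Matrix (Fin K) (Fin N) ℝ)
    (Dd : Matrix (Fin M) (Fin N) ℝ) (Pb : EuclideanSpace ℝ (Fin K))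
    (ρ α τU : ℝ) (U₁ U₂ : EuclideanSpace ℝ (Fin N)) (l₁ l₂ : EuclideanSpace ℝ (Fin M)) :
    Phi1 Pt Dd Pb ρ α τU U₁ l₁ - Phi1 Pt Dd Pb ρ α τU U₂ l₂ =
      mulVecE Pt.transpose (mulVecE Pt (U₁ - U₂)) + (ρ + (1 - τU)/α) • (U₁ - U₂)
        - mulVecE Dd.transpose (l₁ - l₂) := by
  have key : mulVecE Pt.transpose (Pb + mulVecE Pt U₁) - mulVecE Pt.transpose (Pb + mulVecE Pt U₂)
      = mulVecE Pt.transpose (mulVecE Pt U₁) - mulVecE Pt.transpose (mulVecE Pt U₂) := by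
    rw [← mulVecE_sub, ← mulVecE_sub]
    congr 1
    abel
  simp only [Phi1, gradUL]
  rw [mulVecE_sub Pt U₁ U₂, mulVecE_sub Pt.transpose (mulVecE Pt U₁) (mulVecE Pt U₂),
    mulVecE_sub Dd.transpose l₁ l₂, ← key]
  module

lemma Phi2_diff {N M : ℕ} (Dd : Matrix (Fin M) (Fin N) ℝ)
    (Yb : EuclideanSpace ℝ (Fin M)) (β τlam : ℝ)
    (U₁ U₂ : EuclideanSpace ℝ (Fin N)) (l₁ l₂ : EuclideanSpace ℝ (Fin M)) :
    Phi2 Dd Yb β τlam U₁ l₁ - Phi2 Dd Yb β τlam U₂ l₂ =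
      mulVecE Dd (U₁ - U₂) + ((1 - τlam)/β) • (l₁ - l₂) := by
  simp only [Phi2, gradLL, mulVecE_sub]
  module

/-- For the (affine-constraint) Lagrangian of the valley-filling problem,
the mapping `Φ` is strongly monotone on all of `ℝ^N × ℝ^M` with constant
`c = min{ρ + (1−τ_U)/α, (1−τ_λ)/β}`, where `ℝ^N × ℝ^M` carries the inner product
`⟪(U,λ),(U',λ')⟫ = ⟪U,U'⟫ + ⟪λ,λ'⟫`. -/
theorem Phi_strongly_monotone
    {N M K : ℕ} (hN : 0 < N) (hM : 0 < M) (hK : 0 < K)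
    (Pt : Matrix (Fin K) (Fin N) ℝ) (Dd : Matrix (Fin M) (Fin N) ℝ)
    (Pb : EuclideanSpace ℝ (Fin K)) (Yb : EuclideanSpace ℝ (Fin M))
    (ρ α β τU τlam : ℝ) (hρ : 0 ≤ ρ) (hα : 0 < α) (hβ : 0 < β)
    (hτU : τU ∈ Set.Ioo (0:ℝ) 1) (hτlam : τlam ∈ Set.Ioo (0:ℝ) 1)
    (U₁ U₂ : EuclideanSpace ℝ (Fin N)) (l₁ l₂ : EuclideanSpace ℝ (Fin M)) :
    min (ρ + (1 - τU)/α) ((1 - τlam)/β) * (‖U₁ - U₂‖^2 + ‖l₁ - l₂‖^2) ≤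
      ⟪Phi1 Pt Dd Pb ρ α τU U₁ l₁ - Phi1 Pt Dd Pb ρ α τU U₂ l₂, U₁ - U₂⟫
      + ⟪Phi2 Dd Yb β τlam U₁ l₁ - Phi2 Dd Yb β τlam U₂ l₂, l₁ - l₂⟫ := by
  rw [Phi1_diff, Phi2_diff]
  set u := U₁ - U₂ with hu
  set l := l₁ - l₂ with hl
  set cU := ρ + (1 - τU)/α with hcU
  set cL := (1 - τlam)/β with hcL
  rw [inner_sub_left, inner_add_left, inner_add_left, real_inner_smul_left,
    real_inner_smul_left, inner_mulVecE, inner_mulVecE]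
  have hcross : ⟪l, mulVecE Dd u⟫ = ⟪mulVecE Dd u, l⟫ := real_inner_comm _ _
  rw [hcross]
  have h1 : (0:ℝ) ≤ ⟪mulVecE Pt u, mulVecE Pt u⟫ := real_inner_self_nonneg
  have h2 : ⟪u, u⟫ = ‖u‖^2 := real_inner_self_eq_norm_sq u
  have h3 : ⟪l, l⟫ = ‖l‖^2 := real_inner_self_eq_norm_sq l
  rw [h2, h3]
  have hmin1 : min cU cL ≤ cU := min_le_left _ _
  have hmin2 : min cU cL ≤ cL := min_le_right _ _
  have hun : (0:ℝ) ≤ ‖u‖^2 := sq_nonneg _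
  have hln : (0:ℝ) ≤ ‖l‖^2 := sq_nonneg _
  nlinarith [mul_le_mul_of_nonneg_right hmin1 hun, mul_le_mul_of_nonneg_right hmin2 hln]
end
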